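/- Let f : ℝⁿ × ℝᵐ → ℝⁿ, φ : ℝⁿ × ℝᵐ → ℝᵐ, and L : ℝⁿ × ℝᵐ → ℝ be continuously differentiable, and let u : ℝⁿ → ℝᵐ be continuously differentiable with φ(q, u(q)) = 0 for all q ∈ ℝⁿ and D_uφ(q, u(q)) invertible for all q ∈ ℝⁿ. Define f'(q) = f(q, u(q)) and L'(q) = L(q, u(q)). Suppose q₀, q₁, p₀, p₁, Qⁱ, Pⁱ ∈ ℝⁿ (i = 1,…,s) satisfy the symplectic partitioned Runge–Kutta equations for the augmented adjoint ODE system of f' and L': q₁ = q₀ + Δt·Σᵢ bᵢ f'(Qⁱ); Qⁱ = q₀ + Δt·Σⱼ aᵢⱼ f'(Qʲ); p₁ = p₀ − Δt·Σᵢ bᵢ ( Df'(Qⁱ)ᵀ Pⁱ + ∇L'(Qⁱ) ); Pⁱ = p₀ − Δt·Σⱼ ãᵢⱼ ( Df'(Qʲ)ᵀ Pʲ + ∇L'(Qʲ) ). Define Uⁱ := u(Qⁱ) and Λⁱ := −( D_uφ(Qⁱ,Uⁱ)ᵀ )⁻¹ ( D_uf(Qⁱ,Uⁱ)ᵀ Pⁱ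 + ∇_uL(Qⁱ,Uⁱ) ). Then (q₀, q₁, p₀, p₁, Qⁱ, Pⁱ, Uⁱ, Λⁱ) satisfies all six equations of the presymplectic Galerkin Hamiltonian variational integrator for the augmented adjoint DAE system: q₁ = q₀ + Δt·Σᵢ bᵢ f(Qⁱ,Uⁱ); Qⁱ = q₀ + Δt·Σⱼ aᵢⱼ f(Qʲ,Uʲ); p₁ = p₀ − Δt·Σᵢ bᵢ ( D_qf(Qⁱ,Uⁱ)ᵀ Pⁱ + D_qφ(Qⁱ,Uⁱ)ᵀ Λⁱ + ∇_qL(Qⁱ,Uⁱ) ); Pⁱ = p₀ − Δt·Σⱼ ãᵢⱼ ( D_qf(Qʲ,Uʲ)ᵀ Pʲ + D_qφ(Qʲ,Uʲ)ᵀ Λʲ + ∇_qL(Qʲ,Uʲ) ); 0 = φ(Qⁱ,Uⁱ); 0 = D_uf(Qⁱ,Uⁱ)ᵀ Pⁱ + D_uφ(Qⁱ,Uⁱ)ᵀ Λⁱ + ∇_uL(Qⁱ,Uⁱ). -/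

import Mathlib

open scoped RealInnerProductSpace

noncomputable section

abbrev Euc (n : ℕ) : Type := EuclideanSpace ℝ (Fin n)

/-- Partial Jacobian `D_qF(q,u)` with respect to the first argument. -/
noncomputable def Dq {n m k : ℕ} (F : Euc n × Euc m → Euc k) (q : Euc n) (u : Euc m) :
    Euc n →L[ℝ] Euc k :=
  fderiv ℝ (fun q' => F (q', u)) q

/-- Partial Jacobian `D_uF(q,u)` with respect to the second argument. -/
noncomputable def Du {n m k : ℕ} (F : Euc n × Euc m → Euc k) (q : Euc n) (u : Euc m) :
    Euc m →L[ℝ] Euc k :=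
  fderiv ℝ (fun u' => F (q, u')) u

/-- `D_qF(q,u)ᵀ`, the transpose (adjoint) of the partial Jacobian in `q`. -/
noncomputable def DqT {n m k : ℕ} (F : Euc n × Euc m → Euc k) (q : Euc n) (u : Euc m) :
    Euc k →L[ℝ] Euc n :=
  ContinuousLinearMap.adjoint (Dq F q u)

/-- `D_uF(q,u)ᵀ`, the transpose (adjoint) of the partial Jacobian in `u`. -/
noncomputable def DuT {n m k : ℕ} (F : Euc n × Euc m → Euc k) (q : Euc n) (u : Euc m) :
    Euc k →L[ℝ] Euc m :=
  ContinuousLinearMap.adjoint (Du F q u)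

/-- Partial gradient `∇_qL(q,u)`. -/
noncomputable def gradQ {n m : ℕ} (L : Euc n × Euc m → ℝ) (q : Euc n) (u : Euc m) : Euc n :=
  gradient (fun q' => L (q', u)) q

/-- Partial gradient `∇_uL(q,u)`. -/
noncomputable def gradU {n m : ℕ} (L : Euc n × Euc m → ℝ) (q : Euc n) (u : Euc m) : Euc m :=
  gradient (fun u' => L (q, u')) u

section aux

variable {n m k : ℕ} {E : Type*} [NormedAddCommGroup E] [NormedSpace ℝ E]

lemma pd1 (F : Euc n × Euc m → E) (hF : ContDiff ℝ 1 F) (q : Euc n) (u : Euc m) :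
    fderiv ℝ (fun q' => F (q', u)) q = (fderiv ℝ F (q, u)).comp
      ((ContinuousLinearMap.id ℝ (Euc n)).prod 0) := by
  have h1 : HasFDerivAt (fun q' : Euc n => (q', u))
      ((ContinuousLinearMap.id ℝ (Euc n)).prod 0) q :=
    HasFDerivAt.prodMk (hasFDerivAt_id q) (hasFDerivAt_const u q)
  have h2 : HasFDerivAt F (fderiv ℝ F (q, u)) (q, u) :=
    (hF.differentiable one_ne_zero (q, u)).hasFDerivAt
  exact (h2.comp q h1).fderiv

lemma pd2 (F : Euc n × Euc m → E) (hF : ContDiff ℝ 1 F) (q : Euc n) (u : Euc m) :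
    fderiv ℝ (fun u' => F (q, u')) u = (fderiv ℝ F (q, u)).comp
      ((0 : Euc m →L[ℝ] Euc n).prod (ContinuousLinearMap.id ℝ (Euc m))) := by
  have h1 : HasFDerivAt (fun u' : Euc m => (q, u'))
      ((0 : Euc m →L[ℝ] Euc n).prod (ContinuousLinearMap.id ℝ (Euc m))) u :=
    HasFDerivAt.prodMk (hasFDerivAt_const q u) (hasFDerivAt_id u)
  have h2 : HasFDerivAt F (fderiv ℝ F (q, u)) (q, u) :=
    (hF.differentiable one_ne_zero (q, u)).hasFDerivAt
  exact (h2.comp u h1).fderiv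

lemma pdred (F : Euc n × Euc m → E) (hF : ContDiff ℝ 1 F)
    (ufun : Euc n → Euc m) (hufun : ContDiff ℝ 1 ufun) (q : Euc n) :
    fderiv ℝ (fun x => F (x, ufun x)) q
      = ((fderiv ℝ F (q, ufun q)).comp
          ((ContinuousLinearMap.id ℝ (Euc n)).prod 0))
        + ((fderiv ℝ F (q, ufun q)).comp
          ((0 : Euc m →L[ℝ] Euc n).prod (ContinuousLinearMap.id ℝ (Euc m)))).comp
            (fderiv ℝ ufun q) := by
  have h1 : HasFDerivAt (fun x => (x, ufun x))
      ((ContinuousLinearMap.id ℝ (Euc n)).prod (fderiv ℝ ufun q)) q :=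
    HasFDerivAt.prodMk (hasFDerivAt_id q) ((hufun.differentiable one_ne_zero q).hasFDerivAt)
  have h2 : HasFDerivAt F (fderiv ℝ F (q, ufun q)) (q, ufun q) :=
    (hF.differentiable one_ne_zero (q, ufun q)).hasFDerivAt
  rw [show (fun x => F (x, ufun x)) = F ∘ (fun x => (x, ufun x)) from rfl,
    (h2.comp q h1).fderiv]
  ext v
  simp only [ContinuousLinearMap.comp_apply, ContinuousLinearMap.prod_apply,
    ContinuousLinearMap.add_apply, ContinuousLinearMap.id_apply,
    ContinuousLinearMap.zero_apply, ← map_add, Prod.mk_add_mk, add_zero, zero_add]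

lemma fderiv_reduced (F : Euc n × Euc m → Euc k) (hF : ContDiff ℝ 1 F)
    (ufun : Euc n → Euc m) (hufun : ContDiff ℝ 1 ufun) (q : Euc n) :
    fderiv ℝ (fun x => F (x, ufun x)) q
      = Dq F q (ufun q) + (Du F q (ufun q)).comp (fderiv ℝ ufun q) := by
  rw [pdred F hF ufun hufun q, Dq, Du, pd1 F hF, pd2 F hF]

lemma adjoint_fderiv_reduced (F : Euc n × Euc m → Euc k) (hF : ContDiff ℝ 1 F)
    (ufun : Euc n → Euc m) (hufun : ContDiff ℝ 1 ufun) (q : Euc n) (p : Euc k) :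
    ContinuousLinearMap.adjoint (fderiv ℝ (fun x => F (x, ufun x)) q) p
      = DqT F q (ufun q) p
        + ContinuousLinearMap.adjoint (fderiv ℝ ufun q) (DuT F q (ufun q) p) := by
  rw [fderiv_reduced F hF ufun hufun q, map_add, ContinuousLinearMap.adjoint_comp]
  rfl

lemma inner_gradient {j : ℕ} (g : Euc j → ℝ) (x v : Euc j) :
    ⟪gradient g x, v⟫ = fderiv ℝ g x v := by
  rw [gradient]
  exact InnerProductSpace.toDual_symm_apply

lemma gradient_reduced (L : Euc n × Euc m → ℝ) (hL : ContDiff ℝ 1 L)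
    (ufun : Euc n → Euc m) (hufun : ContDiff ℝ 1 ufun) (q : Euc n) :
    gradient (fun x => L (x, ufun x)) q
      = gradQ L q (ufun q)
        + ContinuousLinearMap.adjoint (fderiv ℝ ufun q) (gradU L q (ufun q)) := by
  apply ext_inner_right ℝ
  intro v
  rw [inner_gradient, pdred L hL ufun hufun q, inner_add_left,
    ContinuousLinearMap.adjoint_inner_left, gradQ, gradU, inner_gradient, inner_gradient,
    pd1 L hL, pd2 L hL]
  simp [ContinuousLinearMap.add_apply, ContinuousLinearMap.comp_apply]

lemma Dq_phi (φ : Euc n × Euc m → Euc m) (hφ : ContDiff ℝ 1 φ)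
    (ufun : Euc n → Euc m) (hufun : ContDiff ℝ 1 ufun)
    (hconstr : ∀ x : Euc n, φ (x, ufun x) = 0) (q : Euc n) :
    Dq φ q (ufun q) = -((Du φ q (ufun q)).comp (fderiv ℝ ufun q)) := by
  have h0 : fderiv ℝ (fun x => φ (x, ufun x)) q = 0 := by
    have : (fun x => φ (x, ufun x)) = fun _ => (0 : Euc m) := funext hconstr
    rw [this, fderiv_fun_const]
    rfl
  have h := fderiv_reduced φ hφ ufun hufun q
  rw [h0] at h
  rw [eq_neg_iff_add_eq_zero, ← h]

lemma adj_bij {A : Euc m →L[ℝ] Euc m} (hA : Function.Bijective A) :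
    Function.Bijective (ContinuousLinearMap.adjoint A) := by
  have hinj : Function.Injective (ContinuousLinearMap.adjoint A) := by
    rw [injective_iff_map_eq_zero]
    intro x hx
    apply ext_inner_right ℝ
    intro z
    obtain ⟨y, rfl⟩ := hA.2 z
    rw [← ContinuousLinearMap.adjoint_inner_left, hx, inner_zero_left, inner_zero_left]
  refine ⟨hinj, ?_⟩
  have := (LinearMap.injective_iff_surjective
    (f := (ContinuousLinearMap.adjoint A : Euc m →L[ℝ] Euc m).toLinearMap)).mp hinj
  exact this

lemma inverse_neg_apply {A : Euc m →L[ℝ] Euc m} (hA : Function.Bijective A) (w : Euc m) :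
    A (-(ContinuousLinearMap.inverse A w)) = -w := by
  let e : Euc m ≃L[ℝ] Euc m := ContinuousLinearEquiv.ofBijective A
    (LinearMap.ker_eq_bot.mpr hA.1) (LinearMap.range_eq_top.mpr hA.2)
  have hAe : A = (e : Euc m →L[ℝ] Euc m) := rfl
  rw [hAe, ContinuousLinearMap.inverse_equiv, map_neg]
  simp

lemma key6 (f : Euc n × Euc m → Euc n) (φ : Euc n × Euc m → Euc m) (L : Euc n × Euc m → ℝ)
    (q : Euc n) (u : Euc m) (p : Euc n)
    (hb : Function.Bijective (DuT φ q u)) :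
    DuT f q u p
      + DuT φ q u (-(ContinuousLinearMap.inverse (DuT φ q u)
          (DuT f q u p + gradU L q u)))
      + gradU L q u = 0 := by
  rw [inverse_neg_apply hb]
  abel

lemma key3 (f : Euc n × Euc m → Euc n) (φ : Euc n × Euc m → Euc m) (L : Euc n × Euc m → ℝ)
    (hf : ContDiff ℝ 1 f) (hφ : ContDiff ℝ 1 φ) (hL : ContDiff ℝ 1 L)
    (ufun : Euc n → Euc m) (hufun : ContDiff ℝ 1 ufun)
    (hconstr : ∀ x : Euc n, φ (x, ufun x) = 0)
    (hinv : ∀ x : Euc n, Function.Bijective (Du φ x (ufun x)))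
    (q : Euc n) (p : Euc n) :
    ContinuousLinearMap.adjoint (fderiv ℝ (fun x => f (x, ufun x)) q) p
      + gradient (fun x => L (x, ufun x)) q
    = DqT f q (ufun q) p
      + DqT φ q (ufun q) (-(ContinuousLinearMap.inverse (DuT φ q (ufun q))
          (DuT f q (ufun q) p + gradU L q (ufun q))))
      + gradQ L q (ufun q) := by
  set u := ufun q with hu
  set w := DuT f q u p + gradU L q u with hw
  have hb : Function.Bijective (DuT φ q u) := adj_bij (hinv q)
  have h1 : DuT φ q u (-(ContinuousLinearMap.inverse (DuT φ q u) w)) = -w :=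
    inverse_neg_apply hb w
  have h2 : DqT φ q u
      = -((ContinuousLinearMap.adjoint (fderiv ℝ ufun q)).comp (DuT φ q u)) := by
    rw [DqT, Dq_phi φ hφ ufun hufun hconstr q, ← hu, map_neg,
      ContinuousLinearMap.adjoint_comp]
    rfl
  have h3 : DqT φ q u (-(ContinuousLinearMap.inverse (DuT φ q u) w))
      = ContinuousLinearMap.adjoint (fderiv ℝ ufun q) w := by
    have h1' : DuT φ q u (ContinuousLinearMap.inverse (DuT φ q u) w) = w := by
      rw [map_neg, neg_inj] at h1; exact h1
    rw [h2]
    simp only [ContinuousLinearMap.neg_apply, ContinuousLinearMap.comp_apply,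
      map_neg, h1', neg_neg]
  rw [adjoint_fderiv_reduced f hf ufun hufun q p, gradient_reduced L hL ufun hufun q,
    h3, hw, map_add, ← hu]
  abel

end aux

/-- commutativity of reduction and discretization (bottom face of the
naturality diagram). A symplectic partitioned Runge–Kutta solution of the reduced
augmented adjoint ODE system for `f'(q) = f(q,u(q))`, `L'(q) = L(q,u(q))`, together with
`Uⁱ = u(Qⁱ)` and `Λⁱ = −(D_uφ(Qⁱ,Uⁱ)ᵀ)⁻¹ (D_uf(Qⁱ,Uⁱ)ᵀ Pⁱ + ∇_uL(Qⁱ,Uⁱ))`, satisfies all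
six equations of the presymplectic integrator for the augmented adjoint DAE system. -/
theorem reduction_discretization_commute {n m s : ℕ} (hs : 1 ≤ s)
    (f : Euc n × Euc m → Euc n) (φ : Euc n × Euc m → Euc m) (L : Euc n × Euc m → ℝ)
    (hf : ContDiff ℝ 1 f) (hφ : ContDiff ℝ 1 φ) (hL : ContDiff ℝ 1 L)
    (ufun : Euc n → Euc m) (hufun : ContDiff ℝ 1 ufun)
    (hconstr : ∀ x : Euc n, φ (x, ufun x) = 0)
    (hinv : ∀ x : Euc n, Function.Bijective (Du φ x (ufun x)))
    (Δt : ℝ) (hΔt : 0 < Δt)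
    (a a' : Fin s → Fin s → ℝ) (b : Fin s → ℝ)
    (hsym : ∀ i j, b i * a' i j + b j * a j i = b i * b j)
    (q₀ q₁ p₀ p₁ : Euc n) (Q P : Fin s → Euc n)
    -- symplectic partitioned Runge--Kutta equations for the reduced system
    (hq1 : q₁ = q₀ + Δt • ∑ i, b i • f (Q i, ufun (Q i)))
    (hQ : ∀ i, Q i = q₀ + Δt • ∑ j, a i j • f (Q j, ufun (Q j)))
    (hp1 : p₁ = p₀ - Δt • ∑ i, b i •
      (ContinuousLinearMap.adjoint (fderiv ℝ (fun x => f (x, ufun x)) (Q i)) (P i)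
        + gradient (fun x => L (x, ufun x)) (Q i)))
    (hP : ∀ i, P i = p₀ - Δt • ∑ j, a' i j •
      (ContinuousLinearMap.adjoint (fderiv ℝ (fun x => f (x, ufun x)) (Q j)) (P j)
        + gradient (fun x => L (x, ufun x)) (Q j)))
    -- definitions of the algebraic internal stages
    (U : Fin s → Euc m) (hU : ∀ i, U i = ufun (Q i))
    (Λ : Fin s → Euc m)
    (hΛ : ∀ i, Λ i = -(ContinuousLinearMap.inverse (DuT φ (Q i) (U i))
      (DuT f (Q i) (U i) (P i) + gradU L (Q i) (U i)))) :
    -- the six equations of the presymplectic integrator for the augmented adjoint DAE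
    q₁ = q₀ + Δt • ∑ i, b i • f (Q i, U i) ∧
    (∀ i, Q i = q₀ + Δt • ∑ j, a i j • f (Q j, U j)) ∧
    p₁ = p₀ - Δt • ∑ i, b i •
      (DqT f (Q i) (U i) (P i) + DqT φ (Q i) (U i) (Λ i) + gradQ L (Q i) (U i)) ∧
    (∀ i, P i = p₀ - Δt • ∑ j, a' i j •
      (DqT f (Q j) (U j) (P j) + DqT φ (Q j) (U j) (Λ j) + gradQ L (Q j) (U j))) ∧
    (∀ i, φ (Q i, U i) = 0) ∧
    (∀ i, DuT f (Q i) (U i) (P i) + DuT φ (Q i) (U i) (Λ i)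
      + gradU L (Q i) (U i) = 0) := by
  refine ⟨?_, ?_, ?_, ?_, ?_, ?_⟩
  · simp only [hU]; exact hq1
  · intro i; simp only [hU]; exact hQ i
  · simp only [hU, hΛ]
    rw [hp1]
    congr 1
    congr 1
    apply Finset.sum_congr rfl
    intro i _
    congr 1
    exact key3 f φ L hf hφ hL ufun hufun hconstr hinv (Q i) (P i)
  · intro i
    simp only [hU, hΛ]
    rw [hP i]
    congr 1
    congr 1
    apply Finset.sum_congr rfl
    intro j _
    congr 1
    exact key3 f φ L hf hφ hL ufun hufun hconstr hinv (Q j) (P j)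
  · intro i; rw [hU]; exact hconstr (Q i)
  · intro i
    simp only [hU, hΛ]
    exact key6 f φ L (Q i) (ufun (Q i)) (P i) (adj_bij (hinv (Q i)))

end
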